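/- Let (U_k) be i.i.d. centered with variance σ², S_n their partial sums, and Z_n = (1/√n)·max_{1≤k≤n} |S_k|. Then for α ≥ 8σ², E[Z_n² · 1_{Z_n² ≥ α}] ≤ 2α·ℙ(|S_n|/√n ≥ √α/2) + 2·E[(4 S_n²/n − α)⁺]. -/

import Mathlib

open MeasureTheory ProbabilityTheory Filter

section Aux

variable {Ω : Type*} [MeasureSpace Ω] [IsProbabilityMeasure (ℙ : Measure Ω)]

lemma my_measurable_sup' {ι : Type*} {s : Finset ι} (hs : s.Nonempty) (f : ι → Ω → ℝ)
    (hf : ∀ i, Measurable (f i)) :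
    Measurable fun ω => s.sup' hs fun i => f i ω := by
  induction hs using Finset.Nonempty.cons_induction with
  | singleton a =>
      have h : (fun ω => ({a} : Finset ι).sup' (Finset.singleton_nonempty a) fun i => f i ω)
          = f a := funext fun ω => Finset.sup'_singleton (fun i => f i ω)
      rw [h]; exact hf a
  | cons a s ha hs ih =>
      have h : (fun ω => (Finset.cons a s ha).sup' (Finset.cons_nonempty ha) fun i => f i ω)
          = fun ω => f a ω ⊔ (s.sup' hs fun i => f i ω) :=
        funext fun ω => Finset.sup'_cons hs (fun i => f i ω)
      rw [h]
      exact (hf a).sup ih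

lemma biSup_eq_sup' {s : Finset ℕ} (hs : s.Nonempty) (f : ℕ → ℝ) (hf : ∀ k, 0 ≤ f k) :
    (⨆ k ∈ s, f k) = s.sup' hs f := by
  have hval : ∀ k, (⨆ _ : k ∈ s, f k) = if k ∈ s then f k else 0 := by
    intro k
    by_cases hk : k ∈ s
    · rw [if_pos hk]; exact ciSup_pos hk
    · rw [if_neg hk]
      haveI : IsEmpty (k ∈ s) := ⟨hk⟩
      exact Real.iSup_of_isEmpty _
  have hrw : (⨆ k ∈ s, f k) = ⨆ k, (if k ∈ s then f k else 0) := iSup_congr hval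
  have h0sup : (0:ℝ) ≤ s.sup' hs f := by
    obtain ⟨j, hj⟩ := hs
    exact le_trans (hf j) (Finset.le_sup' f hj)
  have hbdd : BddAbove (Set.range fun k => if k ∈ s then f k else 0) := by
    refine ⟨s.sup' hs f, ?_⟩
    rintro x ⟨k, rfl⟩
    show (if k ∈ s then f k else 0) ≤ s.sup' hs f
    by_cases hk : k ∈ s
    · rw [if_pos hk]; exact Finset.le_sup' f hk
    · rw [if_neg hk]; exact h0sup
  rw [hrw]
  apply le_antisymm
  · refine ciSup_le fun k => ?_
    show (if k ∈ s then f k else 0) ≤ s.sup' hs f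
    by_cases hk : k ∈ s
    · rw [if_pos hk]; exact Finset.le_sup' f hk
    · rw [if_neg hk]; exact h0sup
  · refine Finset.sup'_le hs f fun k hk => ?_
    have := le_ciSup hbdd k
    rwa [if_pos hk] at this

/-- Ottaviani-type maximal inequality. -/
lemma ottaviani (U : ℕ → Ω → ℝ) (hmeas : ∀ k, Measurable (U k))
    (hindep : iIndepFun U ℙ)
    (S : ℕ → Ω → ℝ) (hS : ∀ k ω, S k ω = ∑ i ∈ Finset.range k, U i ω)
    (n : ℕ) (c : ℝ) (hc : 0 < c)
    (hT : ∀ k, k ≤ n → (ℙ : Measure Ω) {ω | c ≤ |∑ i ∈ Finset.Ico k n, U i ω|} ≤ 1/2) :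
    (ℙ : Measure Ω) {ω | ∃ k ∈ Finset.Icc 1 n, 2*c ≤ |S k ω|}
      ≤ 2 * (ℙ : Measure Ω) {ω | c ≤ |S n ω|} := by
  classical
  have hSmeas : ∀ k, Measurable (S k) := by
    intro k
    have : S k = fun ω => ∑ i ∈ Finset.range k, U i ω := funext fun ω => hS k ω
    rw [this]
    exact Finset.measurable_sum _ fun i _ => hmeas i
  set A : ℕ → Set Ω := fun k => {ω | 2*c ≤ |S k ω| ∧ ∀ j < k, |S j ω| < 2*c} with hA
  have hAmeas : ∀ k, MeasurableSet (A k) := by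
    intro k
    have : A k = {ω | 2*c ≤ |S k ω|} ∩ ⋂ j ∈ Set.Iio k, {ω | |S j ω| < 2*c} := by
      ext ω; simp [hA]
    rw [this]
    exact (measurableSet_le measurable_const (hSmeas k).abs).inter
      (MeasurableSet.biInter (Set.to_countable _)
        fun j _ => measurableSet_lt (hSmeas j).abs measurable_const)
  have hS0 : ∀ ω, S 0 ω = 0 := fun ω => by simp [hS]
  have hUnion : {ω | ∃ k ∈ Finset.Icc 1 n, 2*c ≤ |S k ω|} = ⋃ k ∈ Finset.Icc 1 n, A k := by
    ext ω
    simp only [Set.mem_setOf_eq, Set.mem_iUnion, exists_prop]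
    constructor
    · rintro ⟨k, hk, hk2⟩
      obtain ⟨hk1, hkn⟩ := Finset.mem_Icc.mp hk
      have hex : ∃ j, 2*c ≤ |S j ω| := ⟨k, hk2⟩
      set j0 := Nat.find hex with hj0
      have hspec : 2*c ≤ |S j0 ω| := Nat.find_spec hex
      have hle : j0 ≤ k := Nat.find_min' hex hk2
      have h1 : 1 ≤ j0 := by
        rcases Nat.eq_zero_or_pos j0 with h | h
        · exfalso
          rw [h, hS0] at hspec
          simp only [abs_zero] at hspec
          linarith
        · exact h
      refine ⟨j0, Finset.mem_Icc.mpr ⟨h1, hle.trans hkn⟩, hspec, fun j hj => ?_⟩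
      have := Nat.find_min hex hj
      linarith [not_le.mp this]
    · rintro ⟨k, hk, hA1, _⟩
      exact ⟨k, hk, hA1⟩
  have hdisj' : ∀ k l, k < l → Disjoint (A k) (A l) := by
    intro k l hkl
    rw [Set.disjoint_left]
    rintro ω ⟨hk2, _⟩ ⟨_, hl2⟩
    exact absurd hk2 (not_le.mpr (hl2 k hkl))
  have hdisj : (↑(Finset.Icc 1 n) : Set ℕ).PairwiseDisjoint A := by
    intro k _ l _ hkl
    rcases hkl.lt_or_gt with h | h
    · exact hdisj' k l h
    · exact (hdisj' l k h).symm
  set E : Set Ω := {ω | c ≤ |S n ω|} with hE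
  have key : ∀ k ∈ Finset.Icc 1 n, (ℙ : Measure Ω) (A k) ≤ 2 * ℙ (A k ∩ E) := by
    intro k hk
    obtain ⟨hk1, hkn⟩ := Finset.mem_Icc.mp hk
    set T : Ω → ℝ := fun ω => ∑ i ∈ Finset.Ico k n, U i ω with hTdef
    have hTmeas : Measurable T := Finset.measurable_sum _ fun i _ => hmeas i
    have hTS : ∀ ω, T ω = S n ω - S k ω := by
      intro ω
      rw [hTdef]
      simp only [hS]
      exact Finset.sum_Ico_eq_sub _ hkn
    -- Independence step
    set f1 : Ω → ((i : (Finset.range k : Finset ℕ)) → ℝ) := fun ω i => U i ω with hf1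
    set f2 : Ω → ((i : (Finset.Ico k n : Finset ℕ)) → ℝ) := fun ω i => U i ω with hf2
    have hIF : IndepFun f1 f2 ℙ := by
      apply hindep.indepFun_finset _ _ _ hmeas
      rw [Finset.disjoint_left]
      intro i hi hi2
      rw [Finset.mem_range] at hi
      rw [Finset.mem_Ico] at hi2
      omega
    set ps : ℕ → ((i : (Finset.range k : Finset ℕ)) → ℝ) → ℝ :=
      fun j v => ∑ i ∈ Finset.univ.filter (fun i : (Finset.range k : Finset ℕ) => (i : ℕ) < j), v i
      with hps
    have hpsm : ∀ j, Measurable (ps j) :=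
      fun j => Finset.measurable_sum _ fun i _ => measurable_pi_apply i
    have hpsS : ∀ j, j ≤ k → ∀ ω, ps j (f1 ω) = S j ω := by
      intro j hj ω
      rw [hps]
      calc ∑ i ∈ Finset.univ.filter (fun i : (Finset.range k : Finset ℕ) => (i : ℕ) < j), f1 ω i
          = ∑ i : (Finset.range k : Finset ℕ), (if (i : ℕ) < j then U i ω else 0) := by
            rw [Finset.sum_filter]
        _ = ∑ i ∈ Finset.range k, (if i < j then U i ω else 0) :=
            Finset.sum_coe_sort (Finset.range k) (fun i => if i < j then U i ω else 0)
        _ = ∑ i ∈ (Finset.range k).filter (· < j), U i ω := (Finset.sum_filter _ _).symm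
        _ = ∑ i ∈ Finset.range j, U i ω := by
            congr 1
            ext i
            simp only [Finset.mem_filter, Finset.mem_range]
            omega
        _ = S j ω := (hS j ω).symm
    set B1 : Set ((i : (Finset.range k : Finset ℕ)) → ℝ) :=
      {v | 2*c ≤ |ps k v| ∧ ∀ j < k, |ps j v| < 2*c} with hB1
    have hB1m : MeasurableSet B1 := by
      have : B1 = {v | 2*c ≤ |ps k v|} ∩ ⋂ j ∈ Set.Iio k, {v | |ps j v| < 2*c} := by
        ext v; simp [hB1]
      rw [this]
      exact (measurableSet_le measurable_const (hpsm k).abs).inter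
        (MeasurableSet.biInter (Set.to_countable _)
          fun j _ => measurableSet_lt (hpsm j).abs measurable_const)
    have hA1 : A k = f1 ⁻¹' B1 := by
      ext ω
      simp only [hA, hB1, Set.mem_setOf_eq, Set.mem_preimage]
      rw [hpsS k le_rfl ω]
      constructor
      · rintro ⟨h1, h2⟩
        exact ⟨h1, fun j hj => by rw [hpsS j hj.le ω]; exact h2 j hj⟩
      · rintro ⟨h1, h2⟩
        exact ⟨h1, fun j hj => by rw [← hpsS j hj.le ω]; exact h2 j hj⟩
    set B2 : Set ((i : (Finset.Ico k n : Finset ℕ)) → ℝ) :=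
      {w | |∑ i, w i| < c} with hB2
    have hB2m : MeasurableSet B2 :=
      measurableSet_lt (Measurable.abs (Finset.measurable_sum _ fun i _ => measurable_pi_apply i))
        measurable_const
    have hA2 : {ω | |T ω| < c} = f2 ⁻¹' B2 := by
      ext ω
      simp only [hB2, Set.mem_setOf_eq, Set.mem_preimage]
      rw [show ∑ i : (Finset.Ico k n : Finset ℕ), f2 ω i = T ω from
        Finset.sum_coe_sort (Finset.Ico k n) (fun i => U i ω)]
    have hmul : (ℙ : Measure Ω) (A k ∩ {ω | |T ω| < c}) = ℙ (A k) * ℙ {ω | |T ω| < c} := by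
      rw [hA1, hA2]
      exact hIF.measure_inter_preimage_eq_mul _ _ hB1m hB2m
    have hhalf : (2⁻¹ : ENNReal) ≤ ℙ {ω | |T ω| < c} := by
      have hcompl : {ω | |T ω| < c} = {ω | c ≤ |T ω|}ᶜ := by
        ext ω; simp [not_le]
      rw [hcompl, measure_compl (measurableSet_le measurable_const hTmeas.abs)
        (measure_ne_top _ _)]
      have := hT k hkn
      rw [measure_univ]
      calc (2⁻¹ : ENNReal) = 1 - 1/2 := by
            rw [one_div, ENNReal.one_sub_inv_two]
        _ ≤ 1 - ℙ {ω | c ≤ |T ω|} := tsub_le_tsub_left this 1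
    have hsubset : A k ∩ {ω | |T ω| < c} ⊆ A k ∩ E := by
      rintro ω ⟨hAk, hTc⟩
      refine ⟨hAk, ?_⟩
      simp only [hE, Set.mem_setOf_eq]
      have h1 : 2*c ≤ |S k ω| := hAk.1
      have h2 : |T ω| < c := hTc
      have h3 : T ω = S n ω - S k ω := hTS ω
      have h4 : |S k ω| - |S n ω| ≤ |T ω| := by
        rw [h3]
        have := abs_sub_abs_le_abs_sub (S k ω) (S n ω)
        rw [abs_sub_comm]
        linarith
      linarith
    calc (ℙ : Measure Ω) (A k) = 2 * (ℙ (A k) * 2⁻¹) := by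
          rw [mul_comm (2 : ENNReal), mul_assoc,
            ENNReal.inv_mul_cancel (by norm_num) (by norm_num), mul_one]
      _ ≤ 2 * (ℙ (A k) * ℙ {ω | |T ω| < c}) :=
          mul_le_mul_right (mul_le_mul_right hhalf _) _
      _ = 2 * ℙ (A k ∩ {ω | |T ω| < c}) := by rw [hmul]
      _ ≤ 2 * ℙ (A k ∩ E) := mul_le_mul_right (measure_mono hsubset) _
  rw [hUnion, measure_biUnion_finset hdisj fun k _ => hAmeas k]
  have hdisj2 : (↑(Finset.Icc 1 n) : Set ℕ).PairwiseDisjoint (fun k => A k ∩ E) := by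
    intro k hk l hl hkl
    exact Disjoint.mono Set.inter_subset_left Set.inter_subset_left (hdisj hk hl hkl)
  have hEm : MeasurableSet E := measurableSet_le measurable_const (hSmeas n).abs
  calc ∑ k ∈ Finset.Icc 1 n, (ℙ : Measure Ω) (A k)
      ≤ ∑ k ∈ Finset.Icc 1 n, 2 * ℙ (A k ∩ E) := Finset.sum_le_sum key
    _ = 2 * ∑ k ∈ Finset.Icc 1 n, ℙ (A k ∩ E) := by rw [Finset.mul_sum]
    _ = 2 * ℙ (⋃ k ∈ Finset.Icc 1 n, (A k ∩ E)) := by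
        rw [measure_biUnion_finset hdisj2 fun k _ => (hAmeas k).inter hEm]
    _ ≤ 2 * ℙ E := by
        refine mul_le_mul_right (measure_mono ?_) _
        intro ω hω
        simp only [Set.mem_iUnion, exists_prop] at hω
        obtain ⟨k, _, _, h⟩ := hω
        exact h

end Aux

/-- For i.i.d. centered (U k) with variance σ², partial sums S and
    Z_n = (1/√n)·max_{1≤k≤n}|S_k|, for α ≥ 8σ²,
    E[Z_n²·1_{Z_n² ≥ α}] ≤ 2α·ℙ(|S_n|/√n ≥ √α/2) + 2·E[(4S_n²/n − α)⁺]. -/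
theorem truncated_max_bound
    {Ω : Type*} [MeasureSpace Ω] [IsProbabilityMeasure (ℙ : Measure Ω)]
    (U : ℕ → Ω → ℝ)
    (hmeas : ∀ k, Measurable (U k))
    (hindep : iIndepFun U ℙ)
    (hident : ∀ k, IdentDistrib (U k) (U 0) ℙ ℙ)
    (hint : MemLp (U 0) 2 ℙ)
    (hcentered : ∫ ω, U 0 ω ∂ℙ = 0)
    (σ : ℝ) (hσ : 0 < σ) (hvar : ∫ ω, (U 0 ω) ^ 2 ∂ℙ = σ ^ 2)
    (S : ℕ → Ω → ℝ) (hS : ∀ k ω, S k ω = ∑ i ∈ Finset.range k, U i ω)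
    (Z : ℕ → Ω → ℝ)
    (hZ : ∀ n ω, Z n ω = (⨆ k ∈ Finset.Icc 1 n, |S k ω|) / Real.sqrt n)
    (n : ℕ) (hn : 1 ≤ n)
    (α : ℝ) (hα : 8 * σ ^ 2 ≤ α) :
    ∫ ω in {ω' : Ω | α ≤ (Z n ω') ^ 2}, (Z n ω) ^ 2 ∂ℙ
      ≤ 2 * α * ((ℙ : Measure Ω) {ω' : Ω | Real.sqrt α / 2 ≤ |S n ω'| / Real.sqrt n}).toReal
        + 2 * ∫ ω, max (4 * (S n ω) ^ 2 / n - α) 0 ∂ℙ := by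
  classical
  have hn' : (0:ℝ) < n := by exact_mod_cast hn
  have hα0 : (0:ℝ) < α := lt_of_lt_of_le (by positivity) hα
  have hSmeas : ∀ k, Measurable (S k) := by
    intro k
    have : S k = fun ω => ∑ i ∈ Finset.range k, U i ω := funext fun ω => hS k ω
    rw [this]
    exact Finset.measurable_sum _ fun i _ => hmeas i
  have hIcc : (Finset.Icc 1 n).Nonempty := ⟨1, by simp [hn]⟩
  set M : Ω → ℝ := fun ω => (Finset.Icc 1 n).sup' hIcc (fun k => |S k ω|) with hM
  have hMZ : ∀ ω, Z n ω = M ω / Real.sqrt n := by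
    intro ω
    rw [hZ, hM]
    congr 1
    exact biSup_eq_sup' hIcc _ (fun k => abs_nonneg _)
  have hM0 : ∀ ω, 0 ≤ M ω := by
    intro ω
    show (0:ℝ) ≤ (Finset.Icc 1 n).sup' hIcc (fun k => |S k ω|)
    exact le_trans (abs_nonneg (S 1 ω))
      (Finset.le_sup' (fun k => |S k ω|) (Finset.mem_Icc.mpr ⟨le_rfl, hn⟩))
  have hMmeas : Measurable M := my_measurable_sup' hIcc _ (fun k => (hSmeas k).abs)
  have hZsq : ∀ ω, Z n ω ^ 2 = M ω ^ 2 / n := by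
    intro ω
    rw [hMZ, div_pow, Real.sq_sqrt hn'.le]
  set Y : Ω → ℝ := fun ω => 4 * (S n ω) ^ 2 / n with hY
  have hYmeas : Measurable Y := (((hSmeas n).pow_const 2).const_mul 4).div_const _
  -- membership in L^2 of partial sums
  have hUmem : ∀ i, MemLp (U i) 2 ℙ := fun i => (hident i).symm.memLp_snd hint
  have hUint : ∀ i, Integrable (U i) ℙ := fun i => (hUmem i).integrable one_le_two
  -- event identity
  have hsetY : ∀ t, 0 < t → {ω | t ≤ Y ω} = {ω | Real.sqrt (t * n) / 2 ≤ |S n ω|} := by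
    intro t ht
    ext ω
    simp only [hY, Set.mem_setOf_eq]
    rw [le_div_iff₀ hn', div_le_iff₀ (by norm_num : (0:ℝ) < 2)]
    constructor
    · intro h
      have h2 : t * n ≤ (|S n ω| * 2) ^ 2 := by
        rw [mul_pow, sq_abs]
        nlinarith
      calc Real.sqrt (t * n) ≤ Real.sqrt ((|S n ω| * 2) ^ 2) := Real.sqrt_le_sqrt h2
        _ = |S n ω| * 2 := Real.sqrt_sq (by positivity)
    · intro h
      have h2 : t * n ≤ (|S n ω| * 2) ^ 2 := by
        calc t * n = Real.sqrt (t * n) ^ 2 := (Real.sq_sqrt (by positivity)).symm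
          _ ≤ (|S n ω| * 2) ^ 2 := by
              apply pow_le_pow_left₀ (Real.sqrt_nonneg _) h
      rw [mul_pow, sq_abs] at h2
      nlinarith
  -- the probability event in the statement
  have hprobeq : {ω' : Ω | Real.sqrt α / 2 ≤ |S n ω'| / Real.sqrt n} = {ω | α ≤ Y ω} := by
    rw [hsetY α hα0]
    ext ω
    simp only [Set.mem_setOf_eq]
    rw [le_div_iff₀ (Real.sqrt_pos.mpr hn'), div_mul_eq_mul_div,
      ← Real.sqrt_mul hα0.le]
  -- maximal inequality
  have maximal : ∀ t, 8 * σ ^ 2 ≤ t →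
      (ℙ : Measure Ω) {ω | t ≤ (Z n ω) ^ 2} ≤ 2 * ℙ {ω | t ≤ Y ω} := by
    intro t ht
    have ht0 : 0 < t := lt_of_lt_of_le (by positivity) ht
    have hsq : 0 < Real.sqrt (t * n) := Real.sqrt_pos.mpr (by positivity)
    set c : ℝ := Real.sqrt (t * n) / 2 with hc
    have hc0 : 0 < c := by rw [hc]; positivity
    have h2c : 2 * c = Real.sqrt (t * n) := by rw [hc]; ring
    have hsetZ : {ω | t ≤ (Z n ω) ^ 2} = {ω | ∃ k ∈ Finset.Icc 1 n, 2 * c ≤ |S k ω|} := by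
      ext ω
      simp only [Set.mem_setOf_eq]
      rw [hZsq ω, le_div_iff₀ hn', h2c]
      constructor
      · intro h
        have hMω : Real.sqrt (t * n) ≤ M ω := by
          calc Real.sqrt (t * n) ≤ Real.sqrt (M ω ^ 2) := Real.sqrt_le_sqrt (by linarith)
            _ = M ω := Real.sqrt_sq (hM0 ω)
        have : Real.sqrt (t * n) ≤ (Finset.Icc 1 n).sup' hIcc (fun k => |S k ω|) := hMω
        exact (Finset.le_sup'_iff hIcc).mp this
      · rintro ⟨k, hk, hk2⟩
        have hMω : Real.sqrt (t * n) ≤ M ω := by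
          refine le_trans hk2 ?_
          show |S k ω| ≤ (Finset.Icc 1 n).sup' hIcc (fun k => |S k ω|)
          exact Finset.le_sup' (fun k => |S k ω|) hk
        calc t * n = Real.sqrt (t * n) ^ 2 := (Real.sq_sqrt (by positivity)).symm
          _ ≤ M ω ^ 2 := pow_le_pow_left₀ (Real.sqrt_nonneg _) hMω 2
    have hsetY' : {ω | t ≤ Y ω} = {ω | c ≤ |S n ω|} := by
      rw [hsetY t ht0, hc]
    rw [hsetZ, hsetY']
    apply ottaviani U hmeas hindep S hS n c hc0
    -- Chebyshev bound for the increments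
    intro k hkn
    set T : Ω → ℝ := fun ω => ∑ i ∈ Finset.Ico k n, U i ω with hT
    have hTeq : T = ∑ i ∈ Finset.Ico k n, U i := by
      funext ω
      rw [hT, Finset.sum_apply]
    have hTmem : MemLp T 2 ℙ := by
      rw [hTeq]
      exact memLp_finset_sum' _ (fun i _ => hUmem i)
    have hTmean : ∫ ω, T ω ∂ℙ = 0 := by
      show ∫ ω, ∑ i ∈ Finset.Ico k n, U i ω ∂ℙ = 0
      rw [integral_finset_sum _ (fun i _ => hUint i)]
      exact Finset.sum_eq_zero fun i _ => by rw [(hident i).integral_eq]; exact hcentered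
    have hvarU : ∀ i : ℕ, variance (U i) ℙ = σ ^ 2 := by
      intro i
      rw [(hident i).variance_eq]
      have hsq' : ∫ ω, (U 0 ^ 2) ω ∂ℙ = σ ^ 2 := by simpa [Pi.pow_apply] using hvar
      rw [variance_eq_sub hint, hsq', hcentered]
      ring
    have hTvar : variance T ℙ ≤ n * σ ^ 2 := by
      have hvs := IndepFun.variance_sum (μ := ℙ) (X := U) (s := Finset.Ico k n)
        (fun i _ => hUmem i)
        (fun i _ j _ hij => hindep.indepFun hij)
      rw [hTeq, hvs, Finset.sum_congr rfl (fun i _ => hvarU i), Finset.sum_const,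
        Nat.card_Ico, nsmul_eq_mul]
      have : ((n - k : ℕ) : ℝ) ≤ (n : ℝ) := Nat.cast_le.mpr (Nat.sub_le n k)
      nlinarith [sq_nonneg σ]
    have hcheb := meas_ge_le_variance_div_sq (μ := ℙ) hTmem hc0
    rw [hTmean] at hcheb
    simp only [sub_zero] at hcheb
    refine le_trans hcheb ?_
    have hc2 : c ^ 2 = t * n / 4 := by
      rw [hc, div_pow, Real.sq_sqrt (by positivity)]
      norm_num
    have hbound : variance T ℙ / c ^ 2 ≤ 1 / 2 := by
      rw [hc2]
      have h2 : (n * σ ^ 2) / (t * n / 4) = 4 * σ ^ 2 / t := by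
        field_simp
      calc variance T ℙ / (t * n / 4) ≤ (n * σ ^ 2) / (t * n / 4) :=
            (div_le_div_iff_of_pos_right (by positivity)).mpr hTvar
        _ = 4 * σ ^ 2 / t := h2
        _ ≤ 1 / 2 := by
            rw [div_le_div_iff₀ ht0 (by norm_num)]
            linarith
    calc ENNReal.ofReal (variance T ℙ / c ^ 2) ≤ ENNReal.ofReal (1 / 2) :=
          ENNReal.ofReal_le_ofReal hbound
      _ = 1 / 2 := by
          rw [show (1:ℝ)/2 = (2:ℝ)⁻¹ by norm_num, ENNReal.ofReal_inv_of_pos (by norm_num)]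
          norm_num
  -- layer cake assembly
  set Q : Set Ω := {ω' : Ω | α ≤ (Z n ω') ^ 2} with hQ
  have hgmeas : Measurable fun ω => (Z n ω) ^ 2 := by
    have h : (fun ω => (Z n ω) ^ 2) = fun ω => M ω ^ 2 / n := funext hZsq
    rw [h]
    exact (hMmeas.pow_const 2).div_const _
  have hlev : ∀ t : ℝ, MeasurableSet {ω | t ≤ (Z n ω) ^ 2} :=
    fun t => measurableSet_le measurable_const hgmeas
  have hLHS : ∫ ω in Q, (Z n ω) ^ 2 ∂ℙ
      = (∫⁻ ω, ENNReal.ofReal ((Z n ω) ^ 2) ∂((ℙ : Measure Ω).restrict Q)).toReal :=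
    integral_eq_lintegral_of_nonneg_ae (Filter.Eventually.of_forall fun ω => sq_nonneg _)
      hgmeas.aestronglyMeasurable
  set L := ∫⁻ ω, ENNReal.ofReal ((Z n ω) ^ 2) ∂((ℙ : Measure Ω).restrict Q) with hL
  have hlayer : L = ∫⁻ t in Set.Ioi 0, ((ℙ : Measure Ω).restrict Q) {ω | t ≤ (Z n ω) ^ 2} := by
    rw [hL]
    exact lintegral_eq_lintegral_meas_le _ (Filter.Eventually.of_forall fun ω => sq_nonneg _)
      hgmeas.aemeasurable
  have hmono : ∀ t ∈ Set.Ioi (0:ℝ),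
      ((ℙ : Measure Ω).restrict Q) {ω | t ≤ (Z n ω) ^ 2} ≤ 2 * ℙ {ω | max t α ≤ Y ω} := by
    intro t _
    rw [Measure.restrict_apply (hlev t)]
    refine le_trans (measure_mono ?_) (maximal (max t α) (le_trans hα (le_max_right t α)))
    rintro ω ⟨h1, h2⟩
    have h2' : α ≤ (Z n ω) ^ 2 := h2
    exact max_le h1 h2'
  have hbdmeas : Measurable fun t : ℝ => 2 * (ℙ : Measure Ω) {ω | max t α ≤ Y ω} := by
    have hanti : Antitone fun t : ℝ => (ℙ : Measure Ω) {ω | max t α ≤ Y ω} := by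
      intro t₁ t₂ h12
      exact measure_mono fun ω hω => le_trans (max_le_max h12 le_rfl) hω
    exact hanti.measurable.const_mul 2
  have step1 : L ≤ ∫⁻ t in Set.Ioi 0, 2 * ℙ {ω | max t α ≤ Y ω} := by
    rw [hlayer]
    exact setLIntegral_mono hbdmeas hmono
  have hsplit : ∫⁻ t in Set.Ioi (0:ℝ), 2 * ℙ {ω | max t α ≤ Y ω}
      = (∫⁻ t in Set.Ioc (0:ℝ) α, 2 * ℙ {ω | max t α ≤ Y ω})
        + ∫⁻ t in Set.Ioi α, 2 * ℙ {ω | max t α ≤ Y ω} := by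
    rw [← Set.Ioc_union_Ioi_eq_Ioi hα0.le]
    exact lintegral_union measurableSet_Ioi (Set.Ioc_disjoint_Ioi le_rfl)
  have piece1 : ∫⁻ t in Set.Ioc (0:ℝ) α, 2 * ℙ {ω | max t α ≤ Y ω}
      = 2 * (ENNReal.ofReal α * ℙ {ω | α ≤ Y ω}) := by
    calc ∫⁻ t in Set.Ioc (0:ℝ) α, 2 * ℙ {ω | max t α ≤ Y ω}
        = ∫⁻ _ in Set.Ioc (0:ℝ) α, 2 * ℙ {ω | α ≤ Y ω} := by
          refine setLIntegral_congr_fun measurableSet_Ioc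
            (fun t ht => ?_)
          rw [max_eq_right ht.2]
      _ = 2 * ℙ {ω | α ≤ Y ω} * volume (Set.Ioc (0:ℝ) α) := setLIntegral_const _ _
      _ = 2 * (ENNReal.ofReal α * ℙ {ω | α ≤ Y ω}) := by
          rw [Real.volume_Ioc, sub_zero, mul_assoc, mul_comm ((ℙ : Measure Ω) _)]
  have hshift : ∫⁻ t in Set.Ioi α, (ℙ : Measure Ω) {ω | t ≤ Y ω}
      = ∫⁻ s in Set.Ioi (0:ℝ), (ℙ : Measure Ω) {ω | s + α ≤ Y ω} := by
    have hmp : MeasurePreserving (fun s : ℝ => s + α) volume volume :=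
      measurePreserving_add_right volume α
    have hkey := hmp.setLIntegral_comp_preimage_emb
      ((MeasurableEquiv.addRight α).measurableEmbedding)
      (fun t => (ℙ : Measure Ω) {ω | t ≤ Y ω}) (Set.Ioi α)
    rw [← hkey]
    have hpre : (fun s : ℝ => s + α) ⁻¹' Set.Ioi α = Set.Ioi (0:ℝ) := by
      ext s
      simp only [Set.mem_preimage, Set.mem_Ioi]
      constructor <;> intro h <;> linarith
    rw [hpre]
  have piece2 : ∫⁻ t in Set.Ioi α, 2 * ℙ {ω | max t α ≤ Y ω}
      = 2 * ∫⁻ ω, ENNReal.ofReal (max (Y ω - α) 0) ∂ℙ := by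
    calc ∫⁻ t in Set.Ioi α, 2 * ℙ {ω | max t α ≤ Y ω}
        = ∫⁻ t in Set.Ioi α, 2 * ℙ {ω | t ≤ Y ω} := by
          refine setLIntegral_congr_fun measurableSet_Ioi
            (fun t ht => ?_)
          rw [max_eq_left (le_of_lt ht)]
      _ = 2 * ∫⁻ t in Set.Ioi α, ℙ {ω | t ≤ Y ω} := by
          rw [lintegral_const_mul' _ _ (by norm_num)]
      _ = 2 * ∫⁻ s in Set.Ioi (0:ℝ), ℙ {ω | s + α ≤ Y ω} := by rw [hshift]
      _ = 2 * ∫⁻ s in Set.Ioi (0:ℝ), ℙ {ω | s ≤ max (Y ω - α) 0} := by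
          congr 1
          refine setLIntegral_congr_fun measurableSet_Ioi
            (fun s hs => ?_)
          congr 1
          ext ω
          simp only [Set.mem_setOf_eq]
          constructor
          · intro h; exact le_max_of_le_left (by linarith)
          · intro h
            rcases le_max_iff.mp h with h' | h'
            · linarith
            · exact absurd h' (not_le.mpr hs)
      _ = 2 * ∫⁻ ω, ENNReal.ofReal (max (Y ω - α) 0) ∂ℙ := by
          congr 1
          exact (lintegral_eq_lintegral_meas_le ℙ
            (Filter.Eventually.of_forall fun ω => le_max_right _ _)
            ((hYmeas.sub measurable_const).max measurable_const).aemeasurable).symm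
  have hSnmem : MemLp (S n) 2 ℙ := by
    have h : S n = ∑ i ∈ Finset.range n, U i := by
      funext ω
      rw [hS, Finset.sum_apply]
    rw [h]
    exact memLp_finset_sum' _ fun i _ => hUmem i
  have hYint : Integrable Y ℙ := by
    have h : Y = fun ω => 4 * (S n ω) ^ 2 / n := rfl
    rw [h]
    exact ((hSnmem.integrable_sq).const_mul 4).div_const _
  have hpos_int : Integrable (fun ω => max (Y ω - α) 0) ℙ := by
    have h := (hYint.sub (integrable_const α)).pos_part
    simpa using h
  have hposE : ∫⁻ ω, ENNReal.ofReal (max (Y ω - α) 0) ∂ℙ ≠ ⊤ :=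
    hpos_int.lintegral_lt_top.ne
  have hposeq : ∫ ω, max (4 * (S n ω) ^ 2 / n - α) 0 ∂ℙ
      = (∫⁻ ω, ENNReal.ofReal (max (Y ω - α) 0) ∂ℙ).toReal :=
    integral_eq_lintegral_of_nonneg_ae
      (Filter.Eventually.of_forall fun ω => le_max_right _ _)
      ((hYmeas.sub measurable_const).max measurable_const).aestronglyMeasurable
  set P := (ℙ : Measure Ω) {ω | α ≤ Y ω} with hPdef
  set E2 := ∫⁻ ω, ENNReal.ofReal (max (Y ω - α) 0) ∂ℙ with hE2
  have hfin1 : (2 : ENNReal) * (ENNReal.ofReal α * P) ≠ ⊤ :=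
    ENNReal.mul_ne_top (by norm_num)
      (ENNReal.mul_ne_top ENNReal.ofReal_ne_top (measure_ne_top _ _))
  have hfin2 : (2 : ENNReal) * E2 ≠ ⊤ := ENNReal.mul_ne_top (by norm_num) hposE
  have hLbound : L ≤ 2 * (ENNReal.ofReal α * P) + 2 * E2 := by
    calc L ≤ ∫⁻ t in Set.Ioi 0, 2 * ℙ {ω | max t α ≤ Y ω} := step1
      _ = (∫⁻ t in Set.Ioc (0:ℝ) α, 2 * ℙ {ω | max t α ≤ Y ω})
          + ∫⁻ t in Set.Ioi α, 2 * ℙ {ω | max t α ≤ Y ω} := hsplit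
      _ = 2 * (ENNReal.ofReal α * P) + 2 * E2 := by rw [piece1, piece2]
  rw [hLHS, hprobeq, hposeq]
  calc L.toReal ≤ (2 * (ENNReal.ofReal α * P) + 2 * E2).toReal :=
        ENNReal.toReal_mono (ENNReal.add_ne_top.mpr ⟨hfin1, hfin2⟩) hLbound
    _ = 2 * α * P.toReal + 2 * E2.toReal := by
        rw [ENNReal.toReal_add hfin1 hfin2, ENNReal.toReal_mul, ENNReal.toReal_mul,
          ENNReal.toReal_mul, ENNReal.toReal_ofReal hα0.le]
        norm_num
        ring
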